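/- For every integer N ≥ 2, the polynomial X^{2N−1} + μ^N mq·X^{N−1} + μ^{2N−1}q² is irreducible in ℂ(μ,m,q)[X], where ℂ(μ,m,q) is the field of rational functions in three independent indeterminates μ, m, q over ℂ. -/

import Mathlib

open Polynomial

set_option synthInstance.maxHeartbeats 1000000
set_option maxHeartbeats 4000000

/-- The variables are prime in a multivariate polynomial ring over `ℂ`. -/
lemma mv_prime_X {n : ℕ} (i : Fin (n + 1)) :
    Prime (MvPolynomial.X i : MvPolynomial (Fin (n + 1)) ℂ) := by
  let e : MvPolynomial (Fin (n + 1)) ℂ ≃ₐ[ℂ] Polynomial (MvPolynomial (Fin n) ℂ) :=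
    (MvPolynomial.renameEquiv ℂ (Equiv.swap i 0)).trans (MvPolynomial.finSuccEquiv ℂ n)
  rw [← MulEquiv.prime_iff e.toMulEquiv]
  have : e.toMulEquiv (MvPolynomial.X i) = Polynomial.X := by
    simp [e, MvPolynomial.finSuccEquiv_X_zero, Equiv.swap_apply_left]
  rw [this]
  exact Polynomial.prime_X

/-- A linear polynomial over a domain whose two coefficients have only unit
common divisors is irreducible. -/
lemma irreducible_linear_of_coprime {D : Type*} [CommRing D] [IsDomain D]
    (a b : D) (hb : b ≠ 0) (hcop : ∀ r : D, r ∣ a → r ∣ b → IsUnit r) :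
    Irreducible (Polynomial.C b * Polynomial.X + Polynomial.C a) := by
  have hdeg : (Polynomial.C b * Polynomial.X + Polynomial.C a).degree = 1 :=
    Polynomial.degree_linear hb
  constructor
  · intro h
    rw [Polynomial.degree_eq_zero_of_isUnit h] at hdeg
    exact absurd hdeg (by decide)
  · intro f g hfg
    have hne : Polynomial.C b * Polynomial.X + Polynomial.C a ≠ 0 := fun h => by
      rw [h] at hdeg; simp at hdeg
    have hf0 : f ≠ 0 := fun h => hne (by rw [hfg, h, zero_mul])
    have hg0 : g ≠ 0 := fun h => hne (by rw [hfg, h, mul_zero])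
    have hnat : f.natDegree + g.natDegree = 1 := by
      rw [← Polynomial.natDegree_mul hf0 hg0, ← hfg, Polynomial.natDegree_linear hb]
    have key : ∀ h : D[X], Polynomial.C (h.coeff 0) ∣
        Polynomial.C b * Polynomial.X + Polynomial.C a → h.natDegree = 0 → IsUnit h := by
      intro h hdvd h0
      rw [Polynomial.eq_C_of_natDegree_eq_zero h0]
      rw [Polynomial.C_dvd_iff_dvd_coeff] at hdvd
      refine Polynomial.isUnit_C.mpr (hcop _ ?_ ?_)
      · simpa using hdvd 0
      · simpa using hdvd 1
    rcases Nat.eq_zero_or_pos f.natDegree with h0 | hpos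
    · left
      exact key f ⟨g, by rw [hfg]; congr 1; exact (Polynomial.eq_C_of_natDegree_eq_zero h0)⟩ h0
    · right
      have h0g : g.natDegree = 0 := by omega
      refine key g ⟨f, ?_⟩ h0g
      rw [hfg, mul_comm]
      congr 1
      exact (Polynomial.eq_C_of_natDegree_eq_zero h0g)

abbrev Rng := MvPolynomial (Fin 3) ℂ

lemma not_X_dvd_A {A : Rng} {i : Fin 3} {NN : ℕ} (hNN : NN ≠ 0)
    (g : Fin 3 → Polynomial ℂ) (hg : g i = 0)
    (hA : MvPolynomial.aeval g A = Polynomial.X ^ NN) :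
    ¬ (MvPolynomial.X i : Rng) ∣ A := by
  rintro ⟨t, rfl⟩
  have h := hA
  rw [map_mul, MvPolynomial.aeval_X, hg, zero_mul] at h
  exact (pow_ne_zero NN Polynomial.X_ne_zero) h.symm

lemma coprime_AB (N : ℕ) (hN : 2 ≤ N) :
    ∀ r : Rng, r ∣ (MvPolynomial.X 1 ^ (2 * N - 1)
        + MvPolynomial.X 0 ^ (2 * N - 1) * MvPolynomial.X 2 ^ 2 : Rng) →
      r ∣ (MvPolynomial.X 0 ^ N * MvPolynomial.X 2 * MvPolynomial.X 1 ^ (N - 1) : Rng) →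
      IsUnit r := by
  intro r hrA hrB
  set A : Rng := MvPolynomial.X 1 ^ (2 * N - 1)
      + MvPolynomial.X 0 ^ (2 * N - 1) * MvPolynomial.X 2 ^ 2 with hAdef
  have hNN : 2 * N - 1 ≠ 0 := by omega
  -- the three non-divisibility facts
  have h0 : ¬ (MvPolynomial.X 0 : Rng) ∣ A := by
    refine not_X_dvd_A hNN ![0, Polynomial.X, 1] (by simp) ?_
    simp [hAdef, zero_pow hNN]
  have h1 : ¬ (MvPolynomial.X 1 : Rng) ∣ A := by
    refine not_X_dvd_A hNN ![Polynomial.X, 0, 1] (by simp) ?_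
    simp [hAdef, zero_pow hNN]
  have h2 : ¬ (MvPolynomial.X 2 : Rng) ∣ A := by
    refine not_X_dvd_A hNN ![1, Polynomial.X, 0] (by simp) ?_
    simp [hAdef]
  by_contra hu
  have hr0 : r ≠ 0 := by
    rintro rfl
    have hA0 : A = 0 := zero_dvd_iff.mp hrA
    exact h1 (hA0 ▸ dvd_zero _)
  obtain ⟨p, hpirr, hpr⟩ := WfDvdMonoid.exists_irreducible_factor hu hr0
  have hp : Prime p := UniqueFactorizationMonoid.irreducible_iff_prime.mp hpirr
  have hpA : p ∣ A := hpr.trans hrA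
  have hpB := hpr.trans hrB
  have hvar : p ∣ (MvPolynomial.X 0 : Rng) ∨ p ∣ (MvPolynomial.X 1 : Rng)
      ∨ p ∣ (MvPolynomial.X 2 : Rng) := by
    rcases (hp.dvd_mul).mp hpB with h | h
    · rcases (hp.dvd_mul).mp h with h' | h'
      · exact Or.inl (hp.dvd_of_dvd_pow h')
      · exact Or.inr (Or.inr h')
    · exact Or.inr (Or.inl (hp.dvd_of_dvd_pow h))
  have key : ∀ i : Fin 3, p ∣ (MvPolynomial.X i : Rng) → (MvPolynomial.X i : Rng) ∣ A := by
    intro i hpi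
    obtain ⟨c, hc⟩ := hpi
    rcases (mv_prime_X i).irreducible.isUnit_or_isUnit hc with h | h
    · exact absurd h hpirr.not_isUnit
    · rw [hc]
      exact h.mul_right_dvd.mpr hpA
  rcases hvar with h | h | h
  exacts [h0 (key 0 h), h1 (key 1 h), h2 (key 2 h)]

/-- For every `N ≥ 2`, the characteristic polynomial
`X^(2N-1) + μ^N mq·X^(N-1) + μ^(2N-1) q²` of the glueball operator in the U(N)
theory with one fundamental flavor is irreducible over the field `ℂ(μ,m,q)` of
rational functions in three independent indeterminates over `ℂ`. -/
theorem glueball_poly_irreducible_UN (N : ℕ) (hN : 2 ≤ N) :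
    let R := MvPolynomial (Fin 3) ℂ
    let K := FractionRing R
    let μ : K := algebraMap R K (MvPolynomial.X 0)
    let m : K := algebraMap R K (MvPolynomial.X 1)
    let q : K := algebraMap R K (MvPolynomial.X 2)
    Irreducible (Polynomial.X ^ (2 * N - 1)
      + Polynomial.C (μ ^ N * m * q) * Polynomial.X ^ (N - 1)
      + Polynomial.C (μ ^ (2 * N - 1) * q ^ 2) : Polynomial K) := by
  intro R K μ m q
  show Irreducible (Polynomial.X ^ (2 * N - 1)
      + Polynomial.C ((algebraMap Rng (FractionRing Rng) (MvPolynomial.X 0)) ^ N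
          * algebraMap Rng (FractionRing Rng) (MvPolynomial.X 1)
          * algebraMap Rng (FractionRing Rng) (MvPolynomial.X 2)) * Polynomial.X ^ (N - 1)
      + Polynomial.C ((algebraMap Rng (FractionRing Rng) (MvPolynomial.X 0)) ^ (2 * N - 1)
          * (algebraMap Rng (FractionRing Rng) (MvPolynomial.X 2)) ^ 2)
      : Polynomial (FractionRing Rng))
  have hNN : 2 * N - 1 ≠ 0 := by omega
  set P₀ : Polynomial Rng := Polynomial.X ^ (2 * N - 1)
      + Polynomial.C (MvPolynomial.X 0 ^ N * MvPolynomial.X 1 * MvPolynomial.X 2)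
          * Polynomial.X ^ (N - 1)
      + Polynomial.C (MvPolynomial.X 0 ^ (2 * N - 1) * MvPolynomial.X 2 ^ 2) with hP₀
  -- `P₀` is monic
  have hmonic : P₀.Monic := by
    rw [hP₀, add_assoc]
    apply Polynomial.monic_X_pow_add
    apply lt_of_le_of_lt (Polynomial.degree_add_le _ _)
    rw [max_lt_iff]
    constructor
    · refine lt_of_le_of_lt (Polynomial.degree_C_mul_X_pow_le _ _) ?_
      exact_mod_cast (show N - 1 < 2 * N - 1 by omega)
    · refine lt_of_le_of_lt Polynomial.degree_C_le ?_
      exact_mod_cast (show 0 < 2 * N - 1 by omega)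
  -- `P₀` is irreducible over `Rng`
  have hirr₀ : Irreducible P₀ := by
    set E := MvPolynomial.finSuccEquiv ℂ 3 with hE
    set Φ : Polynomial Rng ≃+* Polynomial Rng :=
      E.symm.toRingEquiv.trans
        (((MvPolynomial.renameEquiv ℂ (Equiv.swap (0 : Fin 4) 2)).toRingEquiv).trans
          E.toRingEquiv) with hΦ
    have happ : ∀ x : Polynomial Rng,
        Φ x = E (MvPolynomial.rename (Equiv.swap (0 : Fin 4) 2) (E.symm x)) := fun _ => rfl
    have hsymmX : E.symm Polynomial.X = MvPolynomial.X 0 := by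
      rw [AlgEquiv.symm_apply_eq]
      exact MvPolynomial.finSuccEquiv_X_zero.symm
    have hsymmC : ∀ j : Fin 3, E.symm (Polynomial.C (MvPolynomial.X j)) = MvPolynomial.X j.succ :=
      fun j => by
        rw [AlgEquiv.symm_apply_eq]
        exact MvPolynomial.finSuccEquiv_X_succ.symm
    have hΦX : Φ Polynomial.X = Polynomial.C (MvPolynomial.X 1) := by
      rw [happ, hsymmX, MvPolynomial.rename_X, Equiv.swap_apply_left]
      have : (2 : Fin 4) = (Fin.succ 1) := rfl
      rw [this, MvPolynomial.finSuccEquiv_X_succ]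
    have hΦ0 : Φ (Polynomial.C (MvPolynomial.X 0)) = Polynomial.C (MvPolynomial.X 0) := by
      rw [happ, hsymmC 0, MvPolynomial.rename_X]
      have h1 : (Equiv.swap (0 : Fin 4) 2) (Fin.succ 0) = Fin.succ 0 := by decide
      rw [h1]
      have : (Fin.succ (0 : Fin 3)) = ((0 : Fin 3)).succ := rfl
      rw [MvPolynomial.finSuccEquiv_X_succ]
    have hΦ1 : Φ (Polynomial.C (MvPolynomial.X 1)) = Polynomial.X := by
      rw [happ, hsymmC 1, MvPolynomial.rename_X]
      have h1 : (Equiv.swap (0 : Fin 4) 2) (Fin.succ 1) = 0 := by decide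
      rw [h1, MvPolynomial.finSuccEquiv_X_zero]
    have hΦ2 : Φ (Polynomial.C (MvPolynomial.X 2)) = Polynomial.C (MvPolynomial.X 2) := by
      rw [happ, hsymmC 2, MvPolynomial.rename_X]
      have h1 : (Equiv.swap (0 : Fin 4) 2) (Fin.succ 2) = Fin.succ 2 := by decide
      rw [h1, MvPolynomial.finSuccEquiv_X_succ]
    set A : Rng := MvPolynomial.X 1 ^ (2 * N - 1)
        + MvPolynomial.X 0 ^ (2 * N - 1) * MvPolynomial.X 2 ^ 2 with hA
    set B : Rng := MvPolynomial.X 0 ^ N * MvPolynomial.X 2 * MvPolynomial.X 1 ^ (N - 1) with hB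
    have hΦP₀ : Φ P₀ = Polynomial.C B * Polynomial.X + Polynomial.C A := by
      rw [hP₀, hA, hB]
      simp only [map_add, map_mul, map_pow, hΦX, hΦ0, hΦ1, hΦ2]
      ring
    have hBne : B ≠ 0 := by
      rw [hB]
      exact mul_ne_zero (mul_ne_zero (pow_ne_zero _ (MvPolynomial.X_ne_zero _))
        (MvPolynomial.X_ne_zero _)) (pow_ne_zero _ (MvPolynomial.X_ne_zero _))
    have hlin : Irreducible (Polynomial.C B * Polynomial.X + Polynomial.C A) :=
      irreducible_linear_of_coprime A B hBne (coprime_AB N hN)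
    have : Irreducible (Φ P₀) := by rw [hΦP₀]; exact hlin
    exact (MulEquiv.irreducible_iff Φ).mp this
  -- pass to the fraction field by Gauss's lemma
  have final := (hmonic.irreducible_iff_irreducible_map_fraction_map
      (K := FractionRing Rng)).mp hirr₀
  have hmap : Polynomial.map (algebraMap Rng (FractionRing Rng)) P₀
      = Polynomial.X ^ (2 * N - 1)
      + Polynomial.C ((algebraMap Rng (FractionRing Rng) (MvPolynomial.X 0)) ^ N
          * algebraMap Rng (FractionRing Rng) (MvPolynomial.X 1)
          * algebraMap Rng (FractionRing Rng) (MvPolynomial.X 2)) * Polynomial.X ^ (N - 1)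
      + Polynomial.C ((algebraMap Rng (FractionRing Rng) (MvPolynomial.X 0)) ^ (2 * N - 1)
          * (algebraMap Rng (FractionRing Rng) (MvPolynomial.X 2)) ^ 2) := by
    rw [hP₀]
    simp [Polynomial.map_add, Polynomial.map_mul, Polynomial.map_pow, Polynomial.map_C,
      Polynomial.map_X, map_mul, map_pow]
  rw [← hmap]
  exact final
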